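/- (Zero-curvature representation of Painlevé P2.) Let α ∈ ℝ and let x : ℝ → ℝ be twice differentiable. For t ∈ ℝ and λ ∈ ℝ with λ ≠ 0 define the 2×2 real matrices U¹(t,λ) := [[−λ, x(t)], [x(t), λ]] and U²(t,λ) := [[4λ² − 2x(t)² − t, −4x(t)λ + α/λ + 2x'(t)], [−4x(t)λ + α/λ − 2x'(t), −4λ² + 2x(t)² + t]]. Then for all t ∈ ℝ and all λ ≠ 0: ∂_λU¹ − ∂_tU² + [U¹, U²] = 2(x''(t) − 2x(t)³ − t·x(t) + α) · e₃, where e₃ = [[0,−1],[1,0]]. In particular the zero-curvature condition holds identically on ℝ × (ℝ \ {0}) if and only if x satisfies the second Painlevé equation x'' = 2x³ + tx − α. -/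

import Mathlib

open Matrix

attribute [local instance] Matrix.normedAddCommGroup Matrix.normedSpace

/-- Partial derivative in the first variable `ξ₁` of a matrix-valued map on `ℝ²`. -/
noncomputable def pd1 {n : ℕ} (f : ℝ × ℝ → Matrix (Fin n) (Fin n) ℝ) (p : ℝ × ℝ) :
    Matrix (Fin n) (Fin n) ℝ :=
  fderiv ℝ f p (1, 0)

/-- Partial derivative in the second variable `ξ₂` of a matrix-valued map on `ℝ²`. -/
noncomputable def pd2 {n : ℕ} (f : ℝ × ℝ → Matrix (Fin n) (Fin n) ℝ) (p : ℝ × ℝ) :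
    Matrix (Fin n) (Fin n) ℝ :=
  fderiv ℝ f p (0, 1)

/-- The P2 potential matrix `U¹(t,λ) = [[−λ, x(t)], [x(t), λ]]`; the point `p = (t, λ)`. -/
noncomputable def U1P2 (x : ℝ → ℝ) (p : ℝ × ℝ) : Matrix (Fin 2) (Fin 2) ℝ :=
  !![-p.2, x p.1; x p.1, p.2]

/-- The P2 potential matrix
`U²(t,λ) = [[4λ² − 2x² − t, −4xλ + α/λ + 2x'], [−4xλ + α/λ − 2x', −4λ² + 2x² + t]]`. -/
noncomputable def U2P2 (α : ℝ) (x : ℝ → ℝ) (p : ℝ × ℝ) : Matrix (Fin 2) (Fin 2) ℝ :=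
  !![4 * p.2 ^ 2 - 2 * (x p.1) ^ 2 - p.1,
     -4 * x p.1 * p.2 + α / p.2 + 2 * deriv x p.1;
     -4 * x p.1 * p.2 + α / p.2 - 2 * deriv x p.1,
     -4 * p.2 ^ 2 + 2 * (x p.1) ^ 2 + p.1]

/-- The basis element `e₃ = [[0, −1], [1, 0]]` of `sl(2,ℝ)`. -/
def e3 : Matrix (Fin 2) (Fin 2) ℝ := !![0, -1; 1, 0]

def mA : Matrix (Fin 2) (Fin 2) ℝ := !![0, 1; 1, 0]
def mB : Matrix (Fin 2) (Fin 2) ℝ := !![-1, 0; 0, 1]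
def mC : Matrix (Fin 2) (Fin 2) ℝ := !![1, 0; 0, -1]
def mD : Matrix (Fin 2) (Fin 2) ℝ := !![0, 1; -1, 0]

section aux
variable (α : ℝ) (x : ℝ → ℝ)

lemma U1_eq : U1P2 x = fun q : ℝ × ℝ => x q.1 • mA + q.2 • mB := by
  funext q; ext i j
  fin_cases i <;> fin_cases j <;> simp [U1P2, mA, mB]

lemma U2_eq : U2P2 α x = fun q : ℝ × ℝ =>
    (4 * (q.2 * q.2) - 2 * (x q.1 * x q.1) - q.1) • mC
      + ((-4 * (x q.1 * q.2) + α * q.2⁻¹) • mA + (2 * deriv x q.1) • mD) := by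
  funext q; ext i j
  fin_cases i <;> fin_cases j <;> (simp [U2P2, mA, mC, mD]; ring)

lemma pd2_U1 (hx : Differentiable ℝ x) (p : ℝ × ℝ) :
    pd2 (U1P2 x) p = mB := by
  have hdx : HasFDerivAt (fun q : ℝ × ℝ => x q.1)
      (((1 : ℝ →L[ℝ] ℝ).smulRight (deriv x p.1)).comp (ContinuousLinearMap.fst ℝ ℝ ℝ)) p :=
    ((hx p.1).hasDerivAt.hasFDerivAt).comp p hasFDerivAt_fst
  have hd := (hdx.smul_const mA).add (hasFDerivAt_snd.smul_const mB)
  simp only [Pi.add_def] at hd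
  rw [← U1_eq x] at hd
  unfold pd2
  refine Eq.trans (DFunLike.congr_fun hd.fderiv (0, 1)) ?_
  simp

lemma pd1_U2 (hx : Differentiable ℝ x) (hx' : Differentiable ℝ (deriv x))
    (p : ℝ × ℝ) (hp : p.2 ≠ 0) :
    pd1 (U2P2 α x) p
      = (-4 * x p.1 * deriv x p.1 - 1) • mC
        + ((-4 * (deriv x p.1 * p.2)) • mA + (2 * deriv (deriv x) p.1) • mD) := by
  have hdx : HasFDerivAt (fun q : ℝ × ℝ => x q.1)
      (((1 : ℝ →L[ℝ] ℝ).smulRight (deriv x p.1)).comp (ContinuousLinearMap.fst ℝ ℝ ℝ)) p :=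
    ((hx p.1).hasDerivAt.hasFDerivAt).comp p hasFDerivAt_fst
  have hdx' : HasFDerivAt (fun q : ℝ × ℝ => deriv x q.1)
      (((1 : ℝ →L[ℝ] ℝ).smulRight (deriv (deriv x) p.1)).comp (ContinuousLinearMap.fst ℝ ℝ ℝ)) p :=
    ((hx' p.1).hasDerivAt.hasFDerivAt).comp p hasFDerivAt_fst
  have h1 : HasFDerivAt (fun q : ℝ × ℝ => 4 * (q.2 * q.2) - 2 * (x q.1 * x q.1) - q.1) _ p :=
    (((hasFDerivAt_snd.mul hasFDerivAt_snd).const_mul 4).sub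
      ((hdx.mul hdx).const_mul 2)).sub hasFDerivAt_fst
  have h2 : HasFDerivAt (fun q : ℝ × ℝ => -4 * (x q.1 * q.2) + α * q.2⁻¹) _ p :=
    (((hdx.mul hasFDerivAt_snd).const_mul (-4)).add
      (((hasFDerivAt_inv hp).comp p hasFDerivAt_snd).const_mul α))
  have h3 : HasFDerivAt (fun q : ℝ × ℝ => 2 * deriv x q.1) _ p := hdx'.const_mul 2
  have hd := (h1.smul_const mC).add ((h2.smul_const mA).add (h3.smul_const mD))
  simp only [Pi.add_def] at hd
  rw [← U2_eq α x] at hd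
  unfold pd1
  refine Eq.trans (DFunLike.congr_fun hd.fderiv (1, 0)) ?_
  simp
  module

end aux

/-- zero-curvature representation of Painlevé P2: for twice differentiable
`x` and `λ ≠ 0`, `∂_λU¹ − ∂_tU² + [U¹, U²] = 2(x'' − 2x³ − tx + α)·e₃`, and the
zero-curvature condition holds identically on `ℝ × (ℝ \ {0})` iff `x` satisfies the second
Painlevé equation `x'' = 2x³ + tx − α`.  Here `∂_t = pd1` and `∂_λ = pd2`. -/
theorem zcr_painleve_two (α : ℝ) (x : ℝ → ℝ)
    (hx : Differentiable ℝ x) (hx' : Differentiable ℝ (deriv x)) :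
    (∀ p : ℝ × ℝ, p.2 ≠ 0 →
      pd2 (U1P2 x) p - pd1 (U2P2 α x) p
        + (U1P2 x p * U2P2 α x p - U2P2 α x p * U1P2 x p)
        = (2 * (deriv (deriv x) p.1 - 2 * (x p.1) ^ 3 - p.1 * x p.1 + α)) • e3) ∧
    ((∀ p : ℝ × ℝ, p.2 ≠ 0 →
      pd2 (U1P2 x) p - pd1 (U2P2 α x) p
        + (U1P2 x p * U2P2 α x p - U2P2 α x p * U1P2 x p) = 0) ↔
      ∀ t : ℝ, deriv (deriv x) t = 2 * (x t) ^ 3 + t * x t - α) := by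

  have main : ∀ p : ℝ × ℝ, p.2 ≠ 0 →
      pd2 (U1P2 x) p - pd1 (U2P2 α x) p
        + (U1P2 x p * U2P2 α x p - U2P2 α x p * U1P2 x p)
        = (2 * (deriv (deriv x) p.1 - 2 * (x p.1) ^ 3 - p.1 * x p.1 + α)) • e3 := by
    intro p hp
    rw [pd2_U1 x hx p, pd1_U2 α x hx hx' p hp]
    ext i j
    fin_cases i <;> fin_cases j <;>
      · simp [U1P2, U2P2, e3, mA, mB, mC, mD, Matrix.mul_apply, Fin.sum_univ_succ]
        field_simp
        ring
  refine ⟨main, ?_, ?_⟩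
  · intro h t
    have h1 := main (t, 1) one_ne_zero
    rw [h (t, 1) one_ne_zero] at h1
    have h2 : (2 * (deriv (deriv x) t - 2 * x t ^ 3 - t * x t + α)) = 0 := by
      have := congrFun (congrFun h1.symm 0) 1
      simpa [e3] using this
    nlinarith [h2]
  · intro h p hp
    rw [main p hp, h p.1]
    ring_nf
    simp
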